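/- arXiv:1701.04914 — 3 statements merged into one kernel-verified Lean document; each statement's English description precedes it below -/
import Mathlib

section
/- Let (D, ⊕, 0̄) be an idempotent commutative monoid whose canonical partial order ⊑ satisfies the descending chain condition. Then every subset S of D has a greatest lower bound (infimum) with respect to ⊑; in particular the infimum of the empty set is 0̄, the greatest element. -/
/-- `v` is a greatest lower bound of the set `s` with respect to the relation `le`. -/
def IsGlbRel {D : Type*} (le : D → D → Prop) (s : Set D) (v : D) : Prop :=
  (∀ a ∈ s, le v a) ∧ ∀ w : D, (∀ a ∈ s, le w a) → le w v

/-- Finite meets of elements of `S`, starting from `z`. -/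
inductive Meets {D : Type*} (op : D → D → D) (z : D) (S : Set D) : D → Prop
  | base : Meets op z S z
  | step (m a : D) : Meets op z S m → a ∈ S → Meets op z S (op m a)

lemma dcc_exists_min {D : Type*} (op : D → D → D)
    (hdcc : ∀ f : ℕ → D, ¬ ∀ n : ℕ, op (f (n + 1)) (f n) = f (n + 1) ∧ f (n + 1) ≠ f n)
    (P : D → Prop) (x : D) (hx : P x) :
    ∃ m, P m ∧ ∀ p, P p → op p m = p → p = m := by
  by_contra h
  push_neg at h
  choose g hg1 hg2 hg3 using h
  let f : ℕ → {d // P d} := fun n =>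
    Nat.rec ⟨x, hx⟩ (fun _ prev => ⟨g prev.1 prev.2, hg1 prev.1 prev.2⟩) n
  exact hdcc (fun n => (f n).1) (fun n => ⟨hg2 (f n).1 (f n).2, hg3 (f n).1 (f n).2⟩)

/-- Let `(D, op, z)` be an idempotent commutative monoid whose canonical
partial order `⊑` (where `a ⊑ b ↔ op a b = a`) satisfies the descending chain condition.
Then every subset `S` of `D` has a greatest lower bound with respect to `⊑`; in particular
the infimum of the empty set is `z` (the greatest element). -/
theorem dcc_has_all_glbs {D : Type*} (op : D → D → D) (z : D)
    (hassoc : ∀ a b c : D, op (op a b) c = op a (op b c))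
    (hcomm : ∀ a b : D, op a b = op b a)
    (hidem : ∀ a : D, op a a = a)
    (hneut : ∀ a : D, op a z = a)
    (hdcc : ∀ f : ℕ → D, ¬ ∀ n : ℕ, op (f (n + 1)) (f n) = f (n + 1) ∧ f (n + 1) ≠ f n) :
    (∀ S : Set D, ∃ v : D, IsGlbRel (fun a b => op a b = a) S v) ∧
      IsGlbRel (fun a b => op a b = a) (∅ : Set D) z := by
  constructor
  · intro S
    obtain ⟨m, hm, hmin⟩ := dcc_exists_min op hdcc (Meets op z S) z Meets.base
    refine ⟨m, fun a ha => ?_, fun w hw => ?_⟩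
    · -- op m a = m
      have hmem : Meets op z S (op m a) := Meets.step m a hm ha
      have : op (op m a) m = op m a := by
        rw [hassoc, hcomm a m, ← hassoc, hidem]
      exact hmin (op m a) hmem this
    · -- w is below every meet
      have key : ∀ d, Meets op z S d → op w d = w := by
        intro d hd
        induction hd with
        | base => exact hneut w
        | step m' a hm' ha ih => rw [← hassoc, ih]; exact hw a ha
      exact key m hm
  · exact ⟨fun a ha => absurd ha (Set.notMem_empty a), fun w _ => hneut w⟩
end

section
/- Let (D, ⊕, ⊗, 0̄, 1̄) be an idempotent semiring whose canonical partial order ⊑ satisfies the descending chain condition, let S ⊆ D be nonempty, and let c ∈ D. Then multiplication distributes over infima: c ⊗ inf S = inf {c ⊗ a : a ∈ S} and (inf S) ⊗ c = inf {a ⊗ c : a ∈ S}, where all infima are taken with respect to ⊑. -/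
/-- Finite sums of elements of `S`. -/
inductive Sums {D : Type*} [Add D] (S : Set D) : D → Prop
  | base {a : D} (h : a ∈ S) : Sums S a
  | add {a b : D} (ha : Sums S a) (hb : Sums S b) : Sums S (a + b)

private lemma sums_add_absorb {D : Type*} [Semiring D] {S : Set D} {t : D}
    (ht : Sums S t) {w : D} (hw : ∀ a ∈ S, w + a = w) : w + t = w := by
  induction ht with
  | base h => exact hw _ h
  | add ha hb iha ihb => rw [← add_assoc, iha, ihb]

private lemma sums_mul_left_absorb {D : Type*} [Semiring D] {S : Set D} {t : D}
    (ht : Sums S t) {w c : D} (hw : ∀ a ∈ S, w + c * a = w) : w + c * t = w := by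
  induction ht with
  | base h => exact hw _ h
  | add ha hb iha ihb => rw [mul_add, ← add_assoc, iha, ihb]

private lemma sums_mul_right_absorb {D : Type*} [Semiring D] {S : Set D} {t : D}
    (ht : Sums S t) {w c : D} (hw : ∀ a ∈ S, w + a * c = w) : w + t * c = w := by
  induction ht with
  | base h => exact hw _ h
  | add ha hb iha ihb => rw [add_mul, ← add_assoc, iha, ihb]

/-- Let `D` be an idempotent semiring (a semiring with idempotent addition)
whose canonical partial order `⊑` (where `a ⊑ b ↔ a + b = a`) satisfies the descending
chain condition, let `S ⊆ D` be nonempty and `c : D`.  Then multiplication distributes over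
infima: `S` has an infimum `v`, and `c * v` is the infimum of `{c * a : a ∈ S}` while
`v * c` is the infimum of `{a * c : a ∈ S}` (all infima with respect to `⊑`). -/
theorem mul_distributes_over_inf {D : Type*} [Semiring D]
    (hidem : ∀ a : D, a + a = a)
    (hdcc : ∀ f : ℕ → D, ¬ ∀ n : ℕ, (f (n + 1) + f n = f (n + 1)) ∧ f (n + 1) ≠ f n)
    (S : Set D) (hS : S.Nonempty) (c : D) :
    ∃ v : D, IsGlbRel (fun a b => a + b = a) S v ∧
      IsGlbRel (fun a b => a + b = a) {x : D | ∃ a ∈ S, x = c * a} (c * v) ∧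
      IsGlbRel (fun a b => a + b = a) {x : D | ∃ a ∈ S, x = a * c} (v * c) := by
  classical
  haveI : IsIrrefl D (fun a b : D => a + b = a ∧ a ≠ b) := ⟨fun a h => h.2 rfl⟩
  haveI : IsTrans D (fun a b : D => a + b = a ∧ a ≠ b) := by
    refine ⟨fun a b c hab hbc => ⟨?_, ?_⟩⟩
    · calc a + c = (a + b) + c := by rw [hab.1]
        _ = a + (b + c) := by rw [add_assoc]
        _ = a + b := by rw [hbc.1]
        _ = a := hab.1
    · rintro rfl
      exact hab.2 (by rw [← hab.1, add_comm, hbc.1])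
  haveI : IsStrictOrder D (fun a b : D => a + b = a ∧ a ≠ b) := {}
  have hwf : WellFounded (fun a b : D => a + b = a ∧ a ≠ b) := by
    rw [RelEmbedding.wellFounded_iff_isEmpty]
    refine ⟨fun f => hdcc (fun n => f n) fun n => ?_⟩
    exact f.map_rel_iff.2 (Nat.lt_succ_self n)
  obtain ⟨a0, ha0⟩ := hS
  obtain ⟨v, hvT, hvmin⟩ := hwf.has_min {x | Sums S x} ⟨a0, Sums.base ha0⟩
  have hlb : ∀ a ∈ S, v + a = v := by
    intro a ha
    by_contra hne
    exact hvmin _ (Sums.add hvT (Sums.base ha))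
      ⟨by rw [add_right_comm, hidem], fun h => hne h⟩
  refine ⟨v, ⟨hlb, fun w hw => sums_add_absorb hvT hw⟩, ⟨?_, ?_⟩, ⟨?_, ?_⟩⟩
  · rintro x ⟨a, ha, rfl⟩
    rw [← mul_add, hlb a ha]
  · intro w hw
    exact sums_mul_left_absorb hvT fun a ha => hw _ ⟨a, ha, rfl⟩
  · rintro x ⟨a, ha, rfl⟩
    rw [← add_mul, hlb a ha]
  · intro w hw
    exact sums_mul_right_absorb hvT fun a ha => hw _ ⟨a, ha, rfl⟩
end

section
/- Let ℛ be a recursive state machine over an idempotent semiring of finite height and A an ℛ-automaton. Then the set post*(L(A)) = { c : there exists c₀ ∈ L(A) with a computation from c₀ to c } of configurations reachable from L(A) is a regular set of configurations, i.e., there exists an ℛ-automaton A' with L(A') = post*(L(A)). -/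
/-! ## Recursive state machines over a semiring -/

/-- A recursive state machine (RSM) over a weight domain `D`: `k` modules, each node/box
belongs to a module (`inMod`, `enMod`, `exMod`, `bxMod`), each box `b` calls module `Y b`.
Call nodes are pairs `(b, e)` and return nodes are pairs `(b, x)`.  Nodes are encoded as
sums: sources of transitions are `In ⊕ En ⊕ (Bx × Ex)` (internal, entry, return nodes) and
targets are `In ⊕ Ex ⊕ (Bx × En)` (internal, exit, call nodes).  `δ` is the transition
relation and `w` the weight function.  Well-formedness is expressed by `RSM.WF`. -/
structure RSM (D : Type) where
  k : ℕ
  In : Type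
  En : Type
  Ex : Type
  Bx : Type
  finIn : Finite In
  finEn : Finite En
  finEx : Finite Ex
  finBx : Finite Bx
  inMod : In → Fin k
  enMod : En → Fin k
  exMod : Ex → Fin k
  bxMod : Bx → Fin k
  Y : Bx → Fin k
  δ : Set ((In ⊕ En ⊕ (Bx × Ex)) × (In ⊕ Ex ⊕ (Bx × En)))
  w : (In ⊕ En ⊕ (Bx × Ex)) × (In ⊕ Ex ⊕ (Bx × En)) → D

namespace RSM

variable {D : Type}

/-- Source nodes: internal, entry, and return nodes. -/
abbrev Src (ρ : RSM D) : Type := ρ.In ⊕ ρ.En ⊕ (ρ.Bx × ρ.Ex)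

/-- Target nodes: internal, exit, and call nodes. -/
abbrev Dst (ρ : RSM D) : Type := ρ.In ⊕ ρ.Ex ⊕ (ρ.Bx × ρ.En)

/-- The module of a source node (a return node `(b, x)` lies in the module of `b`). -/
def srcMod (ρ : RSM D) : ρ.Src → Fin ρ.k
  | Sum.inl u => ρ.inMod u
  | Sum.inr (Sum.inl e) => ρ.enMod e
  | Sum.inr (Sum.inr (b, _)) => ρ.bxMod b

/-- The module of a target node (a call node `(b, e)` lies in the module of `b`). -/
def dstMod (ρ : RSM D) : ρ.Dst → Fin ρ.k
  | Sum.inl u => ρ.inMod u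
  | Sum.inr (Sum.inl x) => ρ.exMod x
  | Sum.inr (Sum.inr (b, _)) => ρ.bxMod b

/-- Validity of a source node: a return node `(b, x)` requires `x ∈ Ex_{Y b}`. -/
def SrcOK (ρ : RSM D) : ρ.Src → Prop
  | Sum.inl _ => True
  | Sum.inr (Sum.inl _) => True
  | Sum.inr (Sum.inr (b, x)) => ρ.exMod x = ρ.Y b

/-- Validity of a target node: a call node `(b, e)` requires `e ∈ En_{Y b}`. -/
def DstOK (ρ : RSM D) : ρ.Dst → Prop
  | Sum.inl _ => True
  | Sum.inr (Sum.inl _) => True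
  | Sum.inr (Sum.inr (b, e)) => ρ.enMod e = ρ.Y b

/-- Well-formedness of an RSM over a semiring: transitions connect valid nodes of the same
module, and every transition into an exit node has weight `1̄`. -/
def WF [Semiring D] (ρ : RSM D) : Prop :=
  (∀ t ∈ ρ.δ, ρ.SrcOK t.1 ∧ ρ.DstOK t.2 ∧ ρ.srcMod t.1 = ρ.dstMod t.2) ∧
  (∀ t ∈ ρ.δ, ∀ x : ρ.Ex, t.2 = Sum.inr (Sum.inl x) → ρ.w t = 1)

/-- A configuration: a (source) node together with a stack of boxes (top first). -/
abbrev Conf (ρ : RSM D) : Type := ρ.Src × List ρ.Bx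

/-- Validity of a configuration `(u, b₁ … b_r)`: the node `u` is valid, consecutive boxes
satisfy `Y b_{i+1} = ` module of `b_i`, and `u` lies in module `Y b₁` if the stack is
nonempty. -/
def ConfOK (ρ : RSM D) (c : ρ.Conf) : Prop :=
  ρ.SrcOK c.1 ∧ List.Chain' (fun a b => ρ.Y b = ρ.bxMod a) c.2 ∧
    ∀ b ∈ c.2.head?, ρ.srcMod c.1 = ρ.Y b

/-- The weighted transition relation on configurations: internal transitions keep the
stack, call transitions push the box and move to the called entry, return transitions pop
the top box `b` and move to the return node `(b, x)`. -/
inductive Step (ρ : RSM D) : ρ.Conf → ρ.Conf → D → Prop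
  | internal {u : ρ.Src} {u' : ρ.In} {S : List ρ.Bx}
      (h : (u, Sum.inl u') ∈ ρ.δ) :
      Step ρ (u, S) (Sum.inl u', S) (ρ.w (u, Sum.inl u'))
  | call {u : ρ.Src} {b : ρ.Bx} {e : ρ.En} {S : List ρ.Bx}
      (h : (u, Sum.inr (Sum.inr (b, e))) ∈ ρ.δ) :
      Step ρ (u, S) (Sum.inr (Sum.inl e), b :: S) (ρ.w (u, Sum.inr (Sum.inr (b, e))))
  | ret {u : ρ.Src} {b : ρ.Bx} {x : ρ.Ex} {S : List ρ.Bx}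
      (h : (u, Sum.inr (Sum.inl x)) ∈ ρ.δ) :
      Step ρ (u, b :: S) (Sum.inr (Sum.inr (b, x)), S) (ρ.w (u, Sum.inr (Sum.inl x)))

/-- `Comp ρ c c' v`: there is a computation (finite sequence of steps) from `c` to `c'`
whose weight (the ordered product of the step weights, empty product `1̄`) is `v`. -/
inductive Comp [Semiring D] (ρ : RSM D) : ρ.Conf → ρ.Conf → D → Prop
  | refl (c : ρ.Conf) : Comp ρ c c 1
  | tail {c c' c'' : ρ.Conf} {v v' : D} :
      Comp ρ c c' v → Step ρ c' c'' v' → Comp ρ c c'' (v * v')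

end RSM

/-! ## Configuration automata -/

/-- A configuration automaton for an RSM `ρ`: states are pairs of a (source) node of `ρ`
and a mark (a natural number); transitions are labeled by `Option ρ.Bx` (`none` for
`ε`-transitions, `some b` for `b`-transitions) and carry weights `wt`; `I` and `F` are the
initial and final states.  Well-formedness is expressed by `ConfAut.WF`. -/
structure ConfAut {D : Type} (ρ : RSM D) where
  Q : Set (ρ.Src × ℕ)
  trans : Set ((ρ.Src × ℕ) × Option ρ.Bx × (ρ.Src × ℕ))
  wt : (ρ.Src × ℕ) × Option ρ.Bx × (ρ.Src × ℕ) → D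
  I : Set (ρ.Src × ℕ)
  F : Set (ρ.Src × ℕ)

namespace ConfAut

variable {D : Type} {ρ : RSM D}

/-- Well-formedness of a configuration automaton: finitely many states carrying valid
nodes; initial and final states are states; final states carry entry nodes; a
`b`-transition goes from a state with an entry node of the called module `Y b` to a state
with an entry node of the module of `b`; an `ε`-transition points to a state with an entry
node `e` and starts either at a state with the same node `e`, or at a state with an
internal or return node of the module of `e`; and every state carrying an entry node has an
`ε`-self-loop of weight `1̄`. -/
def WF [Semiring D] (A : ConfAut ρ) : Prop :=
  A.Q.Finite ∧
  (∀ q ∈ A.Q, ρ.SrcOK q.1) ∧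
  A.I ⊆ A.Q ∧ A.F ⊆ A.Q ∧
  (∀ q ∈ A.F, ∃ e : ρ.En, q.1 = Sum.inr (Sum.inl e)) ∧
  (∀ t ∈ A.trans, t.1 ∈ A.Q ∧ t.2.2 ∈ A.Q) ∧
  (∀ t ∈ A.trans, ∀ b : ρ.Bx, t.2.1 = some b →
      ∃ e e' : ρ.En, t.1.1 = Sum.inr (Sum.inl e) ∧ t.2.2.1 = Sum.inr (Sum.inl e') ∧
        ρ.enMod e = ρ.Y b ∧ ρ.enMod e' = ρ.bxMod b) ∧
  (∀ t ∈ A.trans, t.2.1 = none →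
      ∃ e : ρ.En, t.2.2.1 = Sum.inr (Sum.inl e) ∧
        (t.1.1 = Sum.inr (Sum.inl e) ∨
          (ρ.srcMod t.1.1 = ρ.enMod e ∧ ∀ e' : ρ.En, t.1.1 ≠ Sum.inr (Sum.inl e')))) ∧
  (∀ q ∈ A.Q, ∀ e : ρ.En, q.1 = Sum.inr (Sum.inl e) →
      (q, none, q) ∈ A.trans ∧ A.wt (q, none, q) = 1)

/-- `RunL A q L q'`: the list `L` of transitions of `A` forms a run from `q` to `q'`. -/
inductive RunL (A : ConfAut ρ) :
    (ρ.Src × ℕ) → List ((ρ.Src × ℕ) × Option ρ.Bx × (ρ.Src × ℕ)) → (ρ.Src × ℕ) → Prop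
  | nil (q : ρ.Src × ℕ) : RunL A q [] q
  | cons {q q' qf : ρ.Src × ℕ} {o : Option ρ.Bx}
      {L : List ((ρ.Src × ℕ) × Option ρ.Bx × (ρ.Src × ℕ))} :
      (q, o, q') ∈ A.trans → RunL A q' L qf → RunL A q ((q, o, q') :: L) qf

/-- The label of a run: the word over the boxes spelled by its `b`-transitions. -/
def runLabel (L : List ((ρ.Src × ℕ) × Option ρ.Bx × (ρ.Src × ℕ))) : List ρ.Bx :=
  L.filterMap (fun t => t.2.1)

/-- The weight of a run: the product of its transition weights taken in reverse order. -/
def runWt [Semiring D] (A : ConfAut ρ)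
    (L : List ((ρ.Src × ℕ) × Option ρ.Bx × (ρ.Src × ℕ))) : D :=
  (L.reverse.map A.wt).prod

/-- A configuration `(u, S)` is accepted by `A` if some run from an initial state `(u, m)`
to a final state is labeled by `S` and has weight `≠ 0̄`. -/
def Accepts [Semiring D] (A : ConfAut ρ) (c : ρ.Conf) : Prop :=
  ∃ (m : ℕ) (L : List ((ρ.Src × ℕ) × Option ρ.Bx × (ρ.Src × ℕ))) (qf : ρ.Src × ℕ),
    (c.1, m) ∈ A.I ∧ qf ∈ A.F ∧ A.RunL (c.1, m) L qf ∧
      runLabel L = c.2 ∧ A.runWt L ≠ 0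

/-- The set of configurations accepted by `A`. -/
def Lang [Semiring D] (A : ConfAut ρ) : Set ρ.Conf := { c | A.Accepts c }

/-- The set of marks used by the states of `A`. -/
def marks (A : ConfAut ρ) : Set ℕ := { m | ∃ u : ρ.Src, (u, m) ∈ A.Q }

end ConfAut


open RSM ConfAut
set_option linter.unusedSectionVars false
set_option maxHeartbeats 1000000

namespace PS
variable {D : Type} [Semiring D]

section RSMFacts
variable (ρ : RSM D)

/-- Unweighted reachability. -/
def Reach (c c' : ρ.Conf) : Prop := ∃ v, RSM.Comp ρ c c' v

variable {ρ}

lemma reach_refl (c : ρ.Conf) : Reach ρ c c := ⟨1, RSM.Comp.refl c⟩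

lemma reach_tail {c c' c'' : ρ.Conf} (h : Reach ρ c c') {v'} (hs : RSM.Step ρ c' c'' v') :
    Reach ρ c c'' := by
  obtain ⟨v, h⟩ := h; exact ⟨v * v', RSM.Comp.tail h hs⟩

lemma reach_trans {a b c : ρ.Conf} (h₁ : Reach ρ a b) (h₂ : Reach ρ b c) :
    Reach ρ a c := by
  obtain ⟨w, h₂⟩ := h₂
  induction h₂ with
  | refl => exact h₁
  | tail h s ih => exact reach_tail ih s

lemma step_lift {c c' : ρ.Conf} {v} (h : RSM.Step ρ c c' v) (T : List ρ.Bx) :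
    RSM.Step ρ (c.1, c.2 ++ T) (c'.1, c'.2 ++ T) v := by
  cases h with
  | internal h => exact RSM.Step.internal h
  | call h => exact RSM.Step.call h
  | ret h => exact RSM.Step.ret h

lemma reach_lift {c c' : ρ.Conf} (h : Reach ρ c c') (T : List ρ.Bx) :
    Reach ρ (c.1, c.2 ++ T) (c'.1, c'.2 ++ T) := by
  obtain ⟨v, h⟩ := h
  induction h with
  | refl => exact reach_refl _
  | tail h s ih => exact reach_tail ih (step_lift s T)

lemma reach_lift' {u u' : ρ.Src} {S S' : List ρ.Bx} (h : Reach ρ (u, S) (u', S'))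
    (T : List ρ.Bx) : Reach ρ (u, S ++ T) (u', S' ++ T) := reach_lift h T

/-- Same-level reachability. -/
def Rel (ρ : RSM D) (w u : ρ.Src) : Prop := Reach ρ (w, ([] : List ρ.Bx)) (u, [])

lemma rel_refl (u : ρ.Src) : Rel ρ u u := reach_refl _

/-- A computation ending in an entry node with empty stack is trivial. -/
lemma entry_empty' {c c' : ρ.Conf} {v : D} (h : RSM.Comp ρ c c' v) :
    ∀ e : ρ.En, c' = (Sum.inr (Sum.inl e), []) → c = c' := by
  induction h with
  | refl => intro e _; rfl
  | tail h s ih => intro e he; subst he; cases s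

lemma entry_empty {c : ρ.Conf} {e : ρ.En} (h : Reach ρ c (Sum.inr (Sum.inl e), [])) :
    c = (Sum.inr (Sum.inl e), []) := by
  obtain ⟨v, h⟩ := h; exact entry_empty' h e rfl


/-- The module of the bottom level of a configuration. -/
def botMod (ρ : RSM D) (c : ρ.Conf) : Fin ρ.k :=
  (c.2.getLast?).elim (ρ.srcMod c.1) ρ.bxMod

lemma botMod_nil (u : ρ.Src) : botMod ρ (u, []) = ρ.srcMod u := rfl

lemma botMod_irrel (u u' : ρ.Src) (a : ρ.Bx) (S : List ρ.Bx) :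
    botMod ρ (u, a :: S) = botMod ρ (u', a :: S) := by
  unfold botMod
  cases hc : (a :: S).getLast? with
  | none => simp at hc
  | some y => simp

lemma srcMod_inl (i : ρ.In) : ρ.srcMod (Sum.inl i) = ρ.inMod i := rfl
lemma srcMod_en (e : ρ.En) : ρ.srcMod (Sum.inr (Sum.inl e)) = ρ.enMod e := rfl
lemma srcMod_ret (b : ρ.Bx) (x : ρ.Ex) :
    ρ.srcMod (Sum.inr (Sum.inr (b, x))) = ρ.bxMod b := rfl

lemma step_inv (hρ : ρ.WF) {c c' : ρ.Conf} {v} (h : RSM.Step ρ c c' v)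
    (hc : ρ.ConfOK c) : ρ.ConfOK c' ∧ botMod ρ c' = botMod ρ c := by
  obtain ⟨hok, hch, hhd⟩ := hc
  cases h with
  | @internal u u' S h =>
    have hmod : ρ.srcMod u = ρ.inMod u' := (hρ.1 _ h).2.2
    constructor
    · refine ⟨trivial, hch, ?_⟩
      intro b hb
      have h2 := hhd b hb
      rw [srcMod_inl, ← hmod]
      exact h2
    · cases S with
      | nil => rw [botMod_nil, botMod_nil, srcMod_inl, hmod]
      | cons a S => exact botMod_irrel ..
  | @call u b e S h =>
    have hdst : ρ.DstOK (Sum.inr (Sum.inr (b, e))) := (hρ.1 _ h).2.1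
    have hmod : ρ.srcMod u = ρ.bxMod b := (hρ.1 _ h).2.2
    constructor
    · refine ⟨trivial, ?_, ?_⟩
      · refine List.isChain_cons.2 ⟨?_, hch⟩
        intro b' hb'
        have h2 := hhd b' hb'
        rw [← h2, hmod]
      · intro b' hb'
        simp at hb'
        subst hb'
        rw [srcMod_en]
        exact hdst
    · cases S with
      | nil => rw [botMod_nil]; unfold botMod; simp [hmod]
      | cons a S =>
        rw [botMod_irrel _ u]
        unfold botMod
        simp
  | @ret u b x S h =>
    have hmod : ρ.srcMod u = ρ.exMod x := (hρ.1 _ h).2.2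
    have hhd' : ρ.srcMod u = ρ.Y b := hhd b rfl
    have hch' := List.isChain_cons.1 hch
    constructor
    · refine ⟨?_, hch'.2, ?_⟩
      · show ρ.exMod x = ρ.Y b
        rw [← hmod]; exact hhd'
      · intro b' hb'
        have h2 := hch'.1 b' hb'
        rw [srcMod_ret, ← h2]
    · cases S with
      | nil => rw [botMod_nil, srcMod_ret]; unfold botMod; simp
      | cons a S =>
        rw [botMod_irrel _ u]
        unfold botMod
        simp

lemma reach_inv (hρ : ρ.WF) {c c' : ρ.Conf} (h : Reach ρ c c') (hc : ρ.ConfOK c) :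
    ρ.ConfOK c' ∧ botMod ρ c' = botMod ρ c := by
  obtain ⟨v, h⟩ := h
  induction h with
  | refl => exact ⟨hc, rfl⟩
  | tail h s ih =>
    obtain ⟨h1, h2⟩ := ih
    obtain ⟨h3, h4⟩ := step_inv hρ s h1
    exact ⟨h3, h4.trans h2⟩

lemma confOK_entry (e : ρ.En) : ρ.ConfOK ((Sum.inr (Sum.inl e) : ρ.Src), []) :=
  ⟨trivial, List.isChain_nil, by simp⟩

lemma rel_mod (hρ : ρ.WF) {e : ρ.En} {u : ρ.Src}
    (h : Rel ρ (Sum.inr (Sum.inl e)) u) :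
    ρ.SrcOK u ∧ ρ.srcMod u = ρ.enMod e := by
  obtain ⟨h1, h2⟩ := reach_inv hρ h (confOK_entry e)
  refine ⟨h1.1, ?_⟩
  rw [← srcMod_en (ρ := ρ) e, ← botMod_nil, ← botMod_nil]
  exact h2

/-- `Up w u P` : from `(w, T)` the RSM can climb to `(u, P ++ T)` never touching `T`. -/
inductive Up (ρ : RSM D) : ρ.Src → ρ.Src → List ρ.Bx → Prop
  | base {w u} : Rel ρ w u → Up ρ w u []
  | push {w w₁ : ρ.Src} {b : ρ.Bx} {e : ρ.En} {u : ρ.Src} {P₁ : List ρ.Bx} :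
      Rel ρ w w₁ → (w₁, Sum.inr (Sum.inr (b, e))) ∈ ρ.δ →
      Up ρ (Sum.inr (Sum.inl e)) u P₁ → Up ρ w u (P₁ ++ [b])

lemma up_nil' {w u : ρ.Src} {P} (h : Up ρ w u P) : P = [] → Rel ρ w u := by
  cases h with
  | base h => exact fun _ => h
  | push h1 h2 h3 => intro hP; simp at hP

lemma up_nil {w u : ρ.Src} (h : Up ρ w u []) : Rel ρ w u := up_nil' h rfl

lemma up_internal {w u : ρ.Src} {P} (h : Up ρ w u P) {i : ρ.In}
    (hi : (u, Sum.inl i) ∈ ρ.δ) : Up ρ w (Sum.inl i) P := by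
  induction h with
  | base h => exact Up.base (reach_tail h (RSM.Step.internal hi))
  | push h1 h2 h3 ih => exact Up.push h1 h2 (ih hi)

lemma up_call {w u : ρ.Src} {P} (h : Up ρ w u P) {b : ρ.Bx} {e : ρ.En}
    (hc : (u, Sum.inr (Sum.inr (b, e))) ∈ ρ.δ) :
    Up ρ w (Sum.inr (Sum.inl e)) (b :: P) := by
  induction h with
  | base h => simpa using Up.push h hc (Up.base (rel_refl _))
  | @push w w₁ b₀ e₀ u P₁ h1 h2 h3 ih => simpa using Up.push h1 h2 (ih hc)

lemma up_ret {w u : ρ.Src} {P} (h : Up ρ w u P) :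
    ∀ {b : ρ.Bx} {P₂ : List ρ.Bx} {x : ρ.Ex}, P = b :: P₂ →
    (u, Sum.inr (Sum.inl x)) ∈ ρ.δ →
    Up ρ w (Sum.inr (Sum.inr (b, x))) P₂ := by
  induction h with
  | base h => intro b P₂ x hP; exact absurd hP (by simp)
  | @push w w₁ b₀ e₀ u P₁ h1 h2 h3 ih =>
    intro b P₂ x hP hx
    cases P₁ with
    | nil =>
      rw [List.nil_append] at hP
      injection hP with h5 h6
      have key : Up ρ w (Sum.inr (Sum.inr (b₀, x))) [] := by
        refine Up.base ?_
        have r1 : Reach ρ (w, []) (w₁, []) := h1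
        have r2 : Reach ρ (w₁, ([] : List ρ.Bx)) (Sum.inr (Sum.inl e₀), [b₀]) :=
          reach_tail (reach_refl _) (RSM.Step.call h2)
        have r3 : Reach ρ ((Sum.inr (Sum.inl e₀) : ρ.Src), [b₀]) (u, [b₀]) := by
          simpa using reach_lift' (up_nil h3) [b₀]
        have r4 : Reach ρ (u, [b₀]) ((Sum.inr (Sum.inr (b₀, x)) : ρ.Src), []) :=
          reach_tail (reach_refl _) (RSM.Step.ret hx)
        exact reach_trans r1 (reach_trans r2 (reach_trans r3 r4))
      rw [← h5, ← h6]
      exact key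
    | cons b₁ P₁' =>
      rw [List.cons_append] at hP
      injection hP with h5 h6
      have key : Up ρ w (Sum.inr (Sum.inr (b, x))) (P₁' ++ [b₀]) := by
        refine Up.push h1 h2 (ih ?_ hx)
        rw [h5]
      rw [← h6]
      exact key

/-- Decomposition of reachability. -/
lemma decomp {c₀ c : ρ.Conf} (h : Reach ρ c₀ c) :
    ∃ (P₀ T P : List ρ.Bx) (w : ρ.Src), c₀.2 = P₀ ++ T ∧ c.2 = P ++ T ∧
      Reach ρ (c₀.1, P₀) (w, []) ∧ Up ρ w c.1 P := by
  obtain ⟨v, h⟩ := h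
  induction h with
  | refl => exact ⟨[], c₀.2, [], c₀.1, by simp, by simp, reach_refl _, Up.base (rel_refl _)⟩
  | @tail c' c'' v v' h s ih =>
    obtain ⟨P₀, T, P, w, h1, h2, h3, h4⟩ := ih
    cases s with
    | @internal u i S hs =>
      exact ⟨P₀, T, P, w, h1, h2, h3, up_internal h4 hs⟩
    | @call u b e S hs =>
      refine ⟨P₀, T, b :: P, w, h1, ?_, h3, up_call h4 hs⟩
      simpa using h2
    | @ret u b x S hs =>
      cases P with
      | nil =>
        simp only [List.nil_append] at h2
        refine ⟨P₀ ++ [b], S, [], Sum.inr (Sum.inr (b, x)), ?_, by simp, ?_,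
          Up.base (rel_refl _)⟩
        · rw [h1, ← h2]; simp
        · have r1 : Reach ρ (c₀.1, P₀ ++ [b]) (w, [b]) := reach_lift' h3 [b]
          have r2 : Reach ρ (w, ([] : List ρ.Bx) ++ [b]) (u, ([] : List ρ.Bx) ++ [b]) :=
            reach_lift' (up_nil h4) [b]
          simp only [List.nil_append] at r2
          have r3 : Reach ρ (u, [b]) ((Sum.inr (Sum.inr (b, x)) : ρ.Src), []) :=
            reach_tail (reach_refl _) (RSM.Step.ret hs)
          exact reach_trans r1 (reach_trans r2 r3)
      | cons b' P₂ =>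
        simp only [List.cons_append] at h2
        injection h2 with hb hS
        refine ⟨P₀, T, P₂, w, h1, hS, h3, ?_⟩
        show Up ρ w (Sum.inr (Sum.inr (b, x))) P₂
        rw [hb]
        exact up_ret h4 rfl hs

end RSMFacts

section AutFacts
variable {ρ : RSM D} {A : ConfAut ρ}

abbrev Tri (ρ : RSM D) := (ρ.Src × ℕ) × Option ρ.Bx × (ρ.Src × ℕ)

lemma runWt_nil : A.runWt [] = 1 := rfl

lemma runWt_cons (t : Tri ρ) (L : List (Tri ρ)) :
    A.runWt (t :: L) = A.runWt L * A.wt t := by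
  unfold ConfAut.runWt
  simp

lemma runWt_append (L₁ L₂ : List (Tri ρ)) :
    A.runWt (L₁ ++ L₂) = A.runWt L₂ * A.runWt L₁ := by
  unfold ConfAut.runWt
  simp

lemma runLabel_nil : runLabel ([] : List (Tri ρ)) = [] := rfl

lemma runLabel_cons (t : Tri ρ) (L : List (Tri ρ)) :
    runLabel (t :: L) = t.2.1.toList ++ runLabel L := by
  unfold ConfAut.runLabel
  cases h : t.2.1 <;> simp [List.filterMap_cons, h]

lemma runLabel_cons_none (q q' : ρ.Src × ℕ) (L : List (Tri ρ)) :
    runLabel ((q, none, q') :: L) = runLabel L := by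
  simp [runLabel_cons]

lemma runLabel_cons_some (q q' : ρ.Src × ℕ) (b : ρ.Bx) (L : List (Tri ρ)) :
    runLabel ((q, some b, q') :: L) = b :: runLabel L := by
  simp [runLabel_cons]

lemma runLabel_append (L₁ L₂ : List (Tri ρ)) :
    runLabel (L₁ ++ L₂) = runLabel L₁ ++ runLabel L₂ := by
  unfold ConfAut.runLabel
  simp

lemma run_append {q q' q'' : ρ.Src × ℕ} {L₁ L₂ : List (Tri ρ)}
    (h₁ : A.RunL q L₁ q') (h₂ : A.RunL q' L₂ q'') : A.RunL q (L₁ ++ L₂) q'' := by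
  induction h₁ with
  | nil => exact h₂
  | cons ht hr ih => exact RunL.cons ht (ih h₂)

lemma run_end_mem (hA : A.WF) {q r : ρ.Src × ℕ} {L} (h : A.RunL q L r) (hq : q ∈ A.Q) :
    r ∈ A.Q := by
  induction h with
  | nil => exact hq
  | cons ht hr ih => exact ih ((hA.2.2.2.2.2.1 _ ht).2)

/-- In a run with empty label starting from an entry state, the node never changes. -/
lemma eps_run_node (hA : A.WF) {q r : ρ.Src × ℕ} {L} (h : A.RunL q L r)
    (hl : runLabel L = []) (he : ∃ e : ρ.En, q.1 = Sum.inr (Sum.inl e)) :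
    r.1 = q.1 := by
  induction h with
  | nil => rfl
  | @cons q q' qf o L ht hr ih =>
    cases o with
    | some b => rw [runLabel_cons_some] at hl; exact absurd hl (by simp)
    | none =>
      rw [runLabel_cons_none] at hl
      obtain ⟨e, he⟩ := he
      obtain ⟨e', h1, h2⟩ := hA.2.2.2.2.2.2.2.1 _ ht rfl
      cases h2 with
      | inl h2 =>
        have hq' : q'.1 = q.1 := by rw [h1, ← h2]
        rw [ih hl ⟨e', h1⟩, hq']
      | inr h2 => exact absurd he (h2.2 e)

/-- Structure of runs of a WF automaton: the start node with the label forms a valid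
configuration, and if the run ends at an entry node the bottom module is its module. -/
lemma runStruct (hA : A.WF) {q r : ρ.Src × ℕ} {L} (h : A.RunL q L r) (hq : q ∈ A.Q) :
    ρ.ConfOK (q.1, runLabel L) ∧
      (∀ e : ρ.En, r.1 = Sum.inr (Sum.inl e) →
        botMod ρ (q.1, runLabel L) = ρ.enMod e) := by
  induction h with
  | nil =>
    refine ⟨⟨hA.2.1 _ hq, List.isChain_nil, by simp [runLabel_nil]⟩, ?_⟩
    intro e he
    rw [runLabel_nil, botMod_nil, he, srcMod_en]
  | @cons q q' qf o L ht hr ih =>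
    have hq' : q' ∈ A.Q := (hA.2.2.2.2.2.1 _ ht).2
    obtain ⟨ihc, ihb⟩ := ih hq'
    cases o with
    | none =>
      rw [runLabel_cons_none]
      obtain ⟨e₁, h1, h2⟩ := hA.2.2.2.2.2.2.2.1 _ ht rfl
      have hmod : ρ.srcMod q.1 = ρ.enMod e₁ := by
        cases h2 with
        | inl h2 => rw [h2, srcMod_en]
        | inr h2 => exact h2.1
      have hmod' : ρ.srcMod q.1 = ρ.srcMod q'.1 := by rw [hmod, h1, srcMod_en]
      constructor
      · refine ⟨hA.2.1 _ hq, ihc.2.1, ?_⟩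
        intro b hb
        rw [hmod']
        exact ihc.2.2 b hb
      · intro e he
        have hbm := ihb e he
        cases hl : runLabel L with
        | nil =>
          rw [hl] at hbm
          rw [botMod_nil] at hbm ⊢
          rw [hmod']
          exact hbm
        | cons a l =>
          rw [hl] at hbm
          rw [botMod_irrel _ q'.1]
          exact hbm
    | some b =>
      obtain ⟨e₀, e₁, h1, h2, h3, h4⟩ := hA.2.2.2.2.2.2.1 _ ht b rfl
      rw [runLabel_cons_some]
      have hsrc : ρ.srcMod q.1 = ρ.Y b := by rw [h1, srcMod_en, h3]
      have hsrc' : ρ.srcMod q'.1 = ρ.bxMod b := by rw [h2, srcMod_en, h4]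
      constructor
      · refine ⟨hA.2.1 _ hq, ?_, ?_⟩
        · refine List.isChain_cons.2 ⟨?_, ihc.2.1⟩
          intro b' hb'
          have := ihc.2.2 b' hb'
          rw [← this, hsrc']
        · intro b' hb'
          simp at hb'
          rw [← hb']
          exact hsrc
      · intro e he
        have hbm := ihb e he
        cases hl : runLabel L with
        | nil =>
          rw [hl, botMod_nil] at hbm
          unfold botMod
          simp only [hl]
          simp [← hbm, hsrc']
        | cons a l =>
          rw [hl] at hbm
          unfold botMod at hbm ⊢
          simp only [hl] at hbm ⊢
          have hirr := botMod_irrel (ρ := ρ) q.1 q'.1 a l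
          unfold botMod at hirr
          exact hirr.trans hbm

/-- Splitting a run according to a factorisation of its label. -/
lemma run_split {L : List (Tri ρ)} :
    ∀ {q₀ qf : ρ.Src × ℕ} {P₀ T : List ρ.Bx}, A.RunL q₀ L qf → runLabel L = P₀ ++ T →
    ∃ qm L₁ L₂, L = L₁ ++ L₂ ∧ A.RunL q₀ L₁ qm ∧ A.RunL qm L₂ qf ∧
      runLabel L₁ = P₀ ∧ runLabel L₂ = T := by
  induction L with
  | nil =>
    intro q₀ qf P₀ T h hl
    cases h
    rw [runLabel_nil] at hl
    obtain ⟨hP₀, hT⟩ : P₀ = [] ∧ T = [] := List.append_eq_nil_iff.1 hl.symm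
    refine ⟨q₀, [], [], rfl, RunL.nil _, RunL.nil _, ?_, ?_⟩ <;>
      simp [ConfAut.runLabel, hP₀, hT]
  | cons t L ih =>
    intro q₀ qf P₀ T h hl
    cases h with
    | @cons q q' _ o _ ht hr =>
      cases o with
      | none =>
        rw [runLabel_cons_none] at hl
        obtain ⟨qm, L₁, L₂, e1, e2, e3, e4, e5⟩ := ih hr hl
        exact ⟨qm, (q₀, none, q') :: L₁, L₂, by rw [e1]; rfl, RunL.cons ht e2, e3,
          by rw [runLabel_cons_none, e4], e5⟩
      | some b =>
        rw [runLabel_cons_some] at hl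
        cases P₀ with
        | nil =>
          refine ⟨q₀, [], (q₀, some b, q') :: L, rfl, RunL.nil _, RunL.cons ht hr, rfl, ?_⟩
          rw [runLabel_cons_some]
          simpa using hl
        | cons p P₀' =>
          injection hl with hb hl'
          obtain ⟨qm, L₁, L₂, e1, e2, e3, e4, e5⟩ := ih hr hl'
          exact ⟨qm, (q₀, some b, q') :: L₁, L₂, by rw [e1]; rfl, RunL.cons ht e2, e3,
            by rw [runLabel_cons_some, e4, hb], e5⟩

end AutFacts

section Absorb

def Hidem (D : Type) [Semiring D] : Prop := ∀ a : D, a + a = a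
def Hheight (D : Type) [Semiring D] : Prop := ∃ H : ℕ, ∀ f : ℕ → D, ∀ n : ℕ,
      (∀ i < n, (f (i + 1) + f i = f (i + 1)) ∧ f (i + 1) ≠ f i) → n ≤ H

variable (hidem : Hidem D) (hheight : Hheight D)

include hidem hheight

lemma absorb_exists (X : Set D) :
    ∃ W : D, (∃ l : List D, (∀ y ∈ l, y ∈ X) ∧ W = l.sum) ∧ ∀ x ∈ X, W + x = W := by
  by_contra hcon
  push_neg at hcon
  have key : ∀ l : List D, (∀ y ∈ l, y ∈ X) → ∃ x ∈ X, l.sum + x ≠ l.sum := by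
    intro l hl
    exact hcon l.sum ⟨l, hl, rfl⟩
  classical
  let T := {l : List D // ∀ y ∈ l, y ∈ X}
  let g : T → T := fun l =>
    ⟨(key l.1 l.2).choose :: l.1, by
      intro y hy
      rcases List.mem_cons.1 hy with h | h
      · rw [h]; exact (key l.1 l.2).choose_spec.1
      · exact l.2 y h⟩
  let f : ℕ → T := fun n => Nat.rec ⟨[], by simp⟩ (fun _ ih => g ih) n
  have hf : ∀ n, f (n + 1) = g (f n) := fun n => rfl
  have hstep : ∀ n, ((f (n + 1)).1.sum + (f n).1.sum = (f (n + 1)).1.sum) ∧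
      (f (n + 1)).1.sum ≠ (f n).1.sum := by
    intro n
    have hx := (key (f n).1 (f n).2).choose_spec.2
    have hsum : (f (n + 1)).1.sum = (key (f n).1 (f n).2).choose + (f n).1.sum := by
      rw [hf]; simp [g]
    constructor
    · rw [hsum, add_assoc, hidem]
    · rw [hsum, add_comm]
      exact hx
  obtain ⟨H, hH⟩ := hheight
  have := hH (fun n => (f n).1.sum) (H + 1) (fun i _ => hstep i)
  omega

noncomputable def Wabs (X : Set D) : D := (absorb_exists hidem hheight X).choose

lemma wabs_absorb (X : Set D) : ∀ x ∈ X, Wabs hidem hheight X + x = Wabs hidem hheight X :=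
  (absorb_exists hidem hheight X).choose_spec.2

lemma wabs_rep (X : Set D) :
    ∃ l : List D, (∀ y ∈ l, y ∈ X) ∧ Wabs hidem hheight X = l.sum :=
  (absorb_exists hidem hheight X).choose_spec.1

omit hidem hheight in
lemma mul_list_sum_ne {a : D} : ∀ {l : List D}, a * l.sum ≠ 0 → ∃ y ∈ l, a * y ≠ 0 := by
  intro l
  induction l with
  | nil => intro h; simp at h
  | cons x l ih =>
    intro h
    rw [List.sum_cons, mul_add] at h
    by_cases h1 : a * x = 0
    · rw [h1, zero_add] at h
      obtain ⟨y, hy, hy2⟩ := ih h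
      exact ⟨y, List.mem_cons_of_mem _ hy, hy2⟩
    · exact ⟨x, List.mem_cons_self, h1⟩

lemma mul_wabs_ne_of_mem {X : Set D} {a x : D} (hx : x ∈ X) (h : a * x ≠ 0) :
    a * Wabs hidem hheight X ≠ 0 := by
  intro h0
  have h2 : a * Wabs hidem hheight X = a * Wabs hidem hheight X + a * x := by
    conv_lhs => rw [← wabs_absorb hidem hheight X x hx]
    rw [mul_add]
  rw [h0, zero_add] at h2
  exact h (h2.symm)

lemma mul_wabs_ne_extract {X : Set D} {a : D} (h : a * Wabs hidem hheight X ≠ 0) :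
    ∃ x ∈ X, a * x ≠ 0 := by
  obtain ⟨l, hl, hrep⟩ := wabs_rep hidem hheight X
  rw [hrep] at h
  obtain ⟨y, hy, hy2⟩ := mul_list_sum_ne h
  exact ⟨y, hl y hy, hy2⟩

end Absorb

section Post
variable (ρ : RSM D) (A : ConfAut ρ)

/-- Join condition: some initial state of `A` has a run to `q`, and from the corresponding
configuration the RSM can reach `(u, [])`. -/
def Join (u : ρ.Src) (q : ρ.Src × ℕ) : Prop :=
  ∃ q₀ ∈ A.I, ∃ L, A.RunL q₀ L q ∧ Reach ρ (q₀.1, runLabel L) (u, [])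

def JoinW (u : ρ.Src) (q : ρ.Src × ℕ) : Set D :=
  {d | ∃ q₀ ∈ A.I, ∃ L, A.RunL q₀ L q ∧ Reach ρ (q₀.1, runLabel L) (u, []) ∧ d = A.runWt L}

def Call5 (u : ρ.Src) (b : ρ.Bx) (q : ρ.Src × ℕ) : Prop :=
  ∃ q₀ ∈ A.I, ∃ (L : List (Tri ρ)) (w' : ρ.Src) (e : ρ.En), A.RunL q₀ L q ∧
    Reach ρ (q₀.1, runLabel L) (w', []) ∧
    (w', Sum.inr (Sum.inr (b, e))) ∈ ρ.δ ∧ u = Sum.inr (Sum.inl e)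

def Call5W (u : ρ.Src) (b : ρ.Bx) (q : ρ.Src × ℕ) : Set D :=
  {d | ∃ q₀ ∈ A.I, ∃ (L : List (Tri ρ)) (w' : ρ.Src) (e : ρ.En), A.RunL q₀ L q ∧
    Reach ρ (q₀.1, runLabel L) (w', []) ∧
    (w', Sum.inr (Sum.inr (b, e))) ∈ ρ.δ ∧ u = Sum.inr (Sum.inl e) ∧ d = A.runWt L}

/-- The transitions of the saturated automaton. -/
inductive Tr : Tri ρ → Prop
  | old {a a' : ρ.Src} {m m' : ℕ} {o : Option ρ.Bx} :
      (((a, m), o, (a', m')) ∈ A.trans) → Tr (((a, m + 1)), o, ((a', m' + 1)))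
  | eps1 {u : ρ.Src} {e : ρ.En} :
      Rel ρ (Sum.inr (Sum.inl e)) u → ρ.SrcOK u →
      (u = Sum.inr (Sum.inl e) ∨ ∀ e' : ρ.En, u ≠ Sum.inr (Sum.inl e')) →
      Tr ((u, 0), none, (Sum.inr (Sum.inl e), 0))
  | box3 {e e' : ρ.En} {u' : ρ.Src} {b : ρ.Bx} :
      Rel ρ (Sum.inr (Sum.inl e')) u' → (u', Sum.inr (Sum.inr (b, e))) ∈ ρ.δ →
      Tr ((Sum.inr (Sum.inl e), 0), some b, (Sum.inr (Sum.inl e'), 0))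
  | eps4 {u : ρ.Src} {q : ρ.Src × ℕ} :
      Join ρ A u q → q ∈ A.Q → (∃ e : ρ.En, q.1 = Sum.inr (Sum.inl e)) → ρ.SrcOK u →
      (u = q.1 ∨ ∀ e' : ρ.En, u ≠ Sum.inr (Sum.inl e')) →
      Tr ((u, 0), none, (q.1, q.2 + 1))
  | box5 {u : ρ.Src} {b : ρ.Bx} {q : ρ.Src × ℕ} :
      Call5 ρ A u b q → q ∈ A.Q → (∃ e : ρ.En, q.1 = Sum.inr (Sum.inl e)) →
      Tr ((u, 0), some b, (q.1, q.2 + 1))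

variable (hidem : Hidem D) (hheight : Hheight D)

/-- The weight function of the saturated automaton. -/
noncomputable def wtF : Tri ρ → D
  | ((u, m + 1), o, ((u', m' + 1))) => A.wt ((u, m), o, (u', m'))
  | ((u, 0), none, ((u', m' + 1))) => Wabs hidem hheight (JoinW ρ A u (u', m'))
  | ((u, 0), some b, ((u', m' + 1))) => Wabs hidem hheight (Call5W ρ A u b (u', m'))
  | (_, _, (_, 0)) => 1

def enc (q : ρ.Src × ℕ) : ρ.Src × ℕ := (q.1, q.2 + 1)

def encT (t : Tri ρ) : Tri ρ := (enc ρ t.1, t.2.1, enc ρ t.2.2)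

/-- The saturated automaton accepting `post*` of the language of `A`. -/
noncomputable def postAut : ConfAut ρ where
  Q := (fun u : ρ.Src => (u, 0)) '' {u | ρ.SrcOK u} ∪ enc ρ '' A.Q
  trans := {t | Tr ρ A t}
  wt := wtF ρ A hidem hheight
  I := (fun u : ρ.Src => (u, 0)) '' {u | ρ.SrcOK u}
  F := enc ρ '' A.F

end Post

section PostFacts
variable {ρ : RSM D} {A : ConfAut ρ} {hidem : Hidem D} {hheight : Hheight D}

lemma mem_trans_iff {t : Tri ρ} :
    t ∈ (postAut ρ A hidem hheight).trans ↔ Tr ρ A t := Iff.rfl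

lemma wtF_encT (t : Tri ρ) : wtF ρ A hidem hheight (encT ρ t) = A.wt t := by
  rcases t with ⟨⟨a, m⟩, o, ⟨a', m'⟩⟩
  rfl

lemma wtF_new_new (u u' : ρ.Src) (o : Option ρ.Bx) :
    wtF ρ A hidem hheight ((u, 0), o, (u', 0)) = 1 := by
  cases o <;> rfl

lemma runLabel_map_encT (L : List (Tri ρ)) : runLabel (L.map (encT ρ)) = runLabel L := by
  unfold ConfAut.runLabel
  rw [List.filterMap_map]
  rfl

lemma runWt_map_encT (L : List (Tri ρ)) :
    (postAut ρ A hidem hheight).runWt (L.map (encT ρ)) = A.runWt L := by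
  unfold ConfAut.runWt
  rw [← List.map_reverse, List.map_map]
  congr 1

lemma encode_run {q r : ρ.Src × ℕ} {L : List (Tri ρ)} (h : A.RunL q L r) :
    (postAut ρ A hidem hheight).RunL (enc ρ q) (L.map (encT ρ)) (enc ρ r) := by
  induction h with
  | nil => exact RunL.nil _
  | @cons q q' qf o L ht hr ih =>
    refine RunL.cons ?_ ih
    show Tr ρ A _
    have : ((q.1, q.2), o, (q'.1, q'.2)) ∈ A.trans := by simpa using ht
    exact Tr.old this

lemma decode_run : ∀ {L : List (Tri ρ)} {a : ρ.Src} {m : ℕ} {r : ρ.Src × ℕ},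
    (postAut ρ A hidem hheight).RunL ((a, m + 1)) L r →
    ∃ (LA : List (Tri ρ)) (r₀ : ρ.Src × ℕ), r = enc ρ r₀ ∧ A.RunL (a, m) LA r₀ ∧
      L = LA.map (encT ρ) := by
  intro L
  induction L with
  | nil =>
    intro a m r h
    cases h
    exact ⟨[], (a, m), rfl, RunL.nil _, rfl⟩
  | cons t L ih =>
    intro a m r h
    cases h with
    | @cons q q' qf o L ht hr =>
      have ht' : Tr ρ A ((a, m + 1), o, q') := ht
      cases ht' with
      | @old a₂ a' m₂ m' o h =>
        obtain ⟨LA, r₀, h1, h2, h3⟩ := ih hr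
        exact ⟨((a, m), o, (a', m')) :: LA, r₀, h1, RunL.cons h h2, by rw [h3]; rfl⟩


lemma srcOK_en {ρ : RSM D} (e : ρ.En) : ρ.SrcOK (Sum.inr (Sum.inl e)) := by
  show True
  trivial

lemma join_mod (hρ : ρ.WF) (hA : A.WF) {u : ρ.Src} {q : ρ.Src × ℕ} (h : Join ρ A u q)
    {e : ρ.En} (he : q.1 = Sum.inr (Sum.inl e)) :
    ρ.SrcOK u ∧ ρ.srcMod u = ρ.enMod e := by
  obtain ⟨q₀, hq₀, L, hrun, hreach⟩ := h
  have hq₀Q : q₀ ∈ A.Q := hA.2.2.1 hq₀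
  obtain ⟨hconf, hbot⟩ := runStruct hA hrun hq₀Q
  obtain ⟨hconf', hbot'⟩ := reach_inv hρ hreach hconf
  refine ⟨hconf'.1, ?_⟩
  rw [← botMod_nil (ρ := ρ) u, hbot', hbot e he]

lemma call5_mod (hρ : ρ.WF) (hA : A.WF) {u : ρ.Src} {b : ρ.Bx} {q : ρ.Src × ℕ}
    (h : Call5 ρ A u b q) {eq : ρ.En} (he : q.1 = Sum.inr (Sum.inl eq)) :
    (∃ e : ρ.En, u = Sum.inr (Sum.inl e) ∧ ρ.enMod e = ρ.Y b) ∧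
      ρ.enMod eq = ρ.bxMod b := by
  obtain ⟨q₀, hq₀, L, w', e, hrun, hreach, hcall, hu⟩ := h
  have hq₀Q : q₀ ∈ A.Q := hA.2.2.1 hq₀
  obtain ⟨hconf, hbot⟩ := runStruct hA hrun hq₀Q
  obtain ⟨hconf', hbot'⟩ := reach_inv hρ hreach hconf
  constructor
  · exact ⟨e, hu, (hρ.1 _ hcall).2.1⟩
  · have h1 : ρ.srcMod w' = ρ.bxMod b := (hρ.1 _ hcall).2.2
    rw [← hbot eq he, ← hbot', botMod_nil]
    exact h1

lemma postAut_wf (hρ : ρ.WF) (hA : A.WF) : (postAut ρ A hidem hheight).WF := by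
  haveI := ρ.finIn; haveI := ρ.finEn; haveI := ρ.finEx; haveI := ρ.finBx
  refine ⟨?_, ?_, ?_, ?_, ?_, ?_, ?_, ?_, ?_⟩
  · -- finiteness
    exact Set.Finite.union ((Set.toFinite _).image _) (hA.1.image _)
  · -- states carry valid nodes
    rintro q (⟨u, hu, rfl⟩ | ⟨a, ha, rfl⟩)
    · exact hu
    · exact hA.2.1 a ha
  · -- I ⊆ Q
    exact Set.subset_union_left
  · -- F ⊆ Q
    exact Set.subset_union_of_subset_right (Set.image_mono hA.2.2.2.1) _
  · -- final states carry entry nodes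
    rintro q ⟨a, ha, rfl⟩
    exact hA.2.2.2.2.1 a ha
  · -- transition endpoints are states
    intro t ht
    cases ht with
    | old h =>
      have := hA.2.2.2.2.2.1 _ h
      exact ⟨Or.inr ⟨_, this.1, rfl⟩, Or.inr ⟨_, this.2, rfl⟩⟩
    | @eps1 u e h1 h2 h3 =>
      exact ⟨Or.inl ⟨_, h2, rfl⟩, Or.inl ⟨_, srcOK_en e, rfl⟩⟩
    | @box3 e e' u' b h1 h2 =>
      exact ⟨Or.inl ⟨_, srcOK_en e, rfl⟩, Or.inl ⟨_, srcOK_en e', rfl⟩⟩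
    | eps4 h1 h2 h3 h4 h5 =>
      exact ⟨Or.inl ⟨_, h4, rfl⟩, Or.inr ⟨_, h2, rfl⟩⟩
    | box5 h1 h2 h3 =>
      obtain ⟨q₀, hq₀, L, w', e, hrun, hreach, hcall, hu⟩ := h1
      refine ⟨Or.inl ⟨_, ?_, rfl⟩, Or.inr ⟨_, h2, rfl⟩⟩
      rw [hu]
      exact srcOK_en e
  · -- b-transitions
    intro t ht b hb
    cases ht with
    | @old a a' m m' o h => exact hA.2.2.2.2.2.2.1 ((a, m), o, (a', m')) h b hb
    | eps1 h1 h2 h3 => simp at hb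
    | @box3 e e' u' b' h1 h2 =>
      injection hb with hb
      subst hb
      refine ⟨e, e', rfl, rfl, (hρ.1 _ h2).2.1, ?_⟩
      have := (rel_mod hρ h1).2
      rw [← this]
      exact (hρ.1 _ h2).2.2
    | eps4 h1 h2 h3 h4 h5 => simp at hb
    | @box5 u b' q h1 h2 h3 =>
      injection hb with hb
      subst hb
      obtain ⟨eq, heq⟩ := h3
      obtain ⟨⟨e, hu, hY⟩, hmod⟩ := call5_mod hρ hA h1 heq
      exact ⟨e, eq, hu, heq, hY, hmod⟩
  · -- ε-transitions
    intro t ht hn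
    cases ht with
    | @old a a' m m' o h => exact hA.2.2.2.2.2.2.2.1 ((a, m), o, (a', m')) h hn
    | @eps1 u e h1 h2 h3 =>
      refine ⟨e, rfl, ?_⟩
      cases h3 with
      | inl h3 => exact Or.inl h3
      | inr h3 => exact Or.inr ⟨(rel_mod hρ h1).2, h3⟩
    | box3 h1 h2 => simp at hn
    | @eps4 u q h1 h2 h3 h4 h5 =>
      obtain ⟨e, he⟩ := h3
      refine ⟨e, he, ?_⟩
      cases h5 with
      | inl h5 => exact Or.inl (by rw [h5, he])
      | inr h5 => exact Or.inr ⟨(join_mod hρ hA h1 he).2, h5⟩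
    | box5 h1 h2 h3 => simp at hn
  · -- ε-self-loops
    rintro q (⟨u, hu, rfl⟩ | ⟨a, ha, rfl⟩) e he
    · constructor
      · show Tr ρ A _
        simp only at he
        subst he
        exact Tr.eps1 (rel_refl _) trivial (Or.inl rfl)
      · exact wtF_new_new (A := A) (hidem := hidem) (hheight := hheight) u u none
    · constructor
      · show Tr ρ A _
        have h1 := (hA.2.2.2.2.2.2.2.2 a ha e he).1
        have h2 : ((a.1, a.2), none, (a.1, a.2)) ∈ A.trans := by simpa using h1
        exact Tr.old h2
      · show wtF ρ A hidem hheight ((a.1, a.2 + 1), none, (a.1, a.2 + 1)) = 1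
        have h1 := (hA.2.2.2.2.2.2.2.2 a ha e he).2
        have : wtF ρ A hidem hheight ((a.1, a.2 + 1), none, (a.1, a.2 + 1)) =
            A.wt ((a.1, a.2), none, (a.1, a.2)) := rfl
        rw [this]
        simpa using h1

end PostFacts

end PS

namespace PS
variable {D : Type} [Semiring D]

section Main
variable {ρ : RSM D} {A : ConfAut ρ} {hidem : Hidem D} {hheight : Hheight D}

lemma enc_inj {a b : ρ.Src × ℕ} (h : enc ρ a = enc ρ b) : a = b := by
  rcases a with ⟨a1, a2⟩
  rcases b with ⟨b1, b2⟩
  simp only [enc, Prod.mk.injEq] at h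
  obtain ⟨h1, h2⟩ := h
  subst h1
  have : a2 = b2 := by omega
  subst this
  rfl

lemma postWt_new_new (u u' : ρ.Src) (o : Option ρ.Bx) :
    (postAut ρ A hidem hheight).wt ((u, 0), o, (u', 0)) = 1 :=
  wtF_new_new (A := A) (hidem := hidem) (hheight := hheight) u u' o

lemma postWt_eps4 (u : ρ.Src) (q : ρ.Src × ℕ) :
    (postAut ρ A hidem hheight).wt ((u, 0), none, (q.1, q.2 + 1)) =
      Wabs hidem hheight (JoinW ρ A u q) := rfl

lemma postWt_box5 (u : ρ.Src) (b : ρ.Bx) (q : ρ.Src × ℕ) :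
    (postAut ρ A hidem hheight).wt ((u, 0), some b, (q.1, q.2 + 1)) =
      Wabs hidem hheight (Call5W ρ A u b q) := rfl

lemma newRun (hρ : ρ.WF) {w u : ρ.Src} {P : List ρ.Bx} (h : Up ρ w u P) :
    ∀ e : ρ.En, w = Sum.inr (Sum.inl e) →
    ∃ Lp : List (Tri ρ), (postAut ρ A hidem hheight).RunL (u, 0) Lp
        (Sum.inr (Sum.inl e), 0) ∧
      runLabel Lp = P ∧ (postAut ρ A hidem hheight).runWt Lp = 1 := by
  induction h with
  | @base w u hrel =>
    intro e hw
    subst hw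
    by_cases hu : ∃ e' : ρ.En, u = Sum.inr (Sum.inl e')
    · obtain ⟨e', rfl⟩ := hu
      have heq := entry_empty (ρ := ρ) hrel
      have he : e' = e := by
        have := congrArg Prod.fst heq
        simpa using this.symm
      subst he
      exact ⟨[], RunL.nil _, rfl, rfl⟩
    · push_neg at hu
      have hok : ρ.SrcOK u := (rel_mod hρ hrel).1
      refine ⟨[((u, 0), none, (Sum.inr (Sum.inl e), 0))], ?_, ?_, ?_⟩
      · exact RunL.cons (Tr.eps1 hrel hok (Or.inr hu)) (RunL.nil _)
      · rfl
      · rw [runWt_cons, runWt_nil, one_mul]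
        exact postWt_new_new u _ none
  | @push w w₁ b e₂ u P₁ hrel hcall hup ih =>
    intro e hw
    subst hw
    obtain ⟨Lp, h1, h2, h3⟩ := ih e₂ rfl
    refine ⟨Lp ++ [((Sum.inr (Sum.inl e₂), 0), some b, (Sum.inr (Sum.inl e), 0))],
      ?_, ?_, ?_⟩
    · refine run_append h1 (RunL.cons ?_ (RunL.nil _))
      exact Tr.box3 hrel hcall
    · rw [runLabel_append, h2, runLabel_cons_some, runLabel_nil]
    · rw [runWt_append, h3, mul_one, runWt_cons, runWt_nil, one_mul]
      exact postWt_new_new _ _ _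


lemma run_split_entry (hA : A.WF) {q₀ qf : ρ.Src × ℕ} {L : List (Tri ρ)}
    (h : A.RunL q₀ L qf) (hq₀ : q₀ ∈ A.Q) (hf : qf ∈ A.F) {P₀ T : List ρ.Bx}
    (hl : runLabel L = P₀ ++ T) :
    ∃ qm L₁ L₂, L = L₁ ++ L₂ ∧ A.RunL q₀ L₁ qm ∧ A.RunL qm L₂ qf ∧
      runLabel L₁ = P₀ ∧ runLabel L₂ = T ∧
      (∃ e : ρ.En, qm.1 = Sum.inr (Sum.inl e)) ∧ qm ∈ A.Q := by
  obtain ⟨qm, L₁, L₂, e1, e2, e3, e4, e5⟩ := run_split h hl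
  have hqm : qm ∈ A.Q := run_end_mem hA e2 hq₀
  cases e3 with
  | nil =>
    exact ⟨_, L₁, [], e1, e2, RunL.nil _, e4, e5, hA.2.2.2.2.1 _ hf, hqm⟩
  | @cons q q' _ o L₂' ht hr =>
    cases o with
    | some b =>
      obtain ⟨e, e', he, _, _, _⟩ := hA.2.2.2.2.2.2.1 _ ht b rfl
      exact ⟨qm, L₁, _, e1, e2, RunL.cons ht hr, e4, e5, ⟨e, he⟩, hqm⟩
    | none =>
      obtain ⟨e, he, hd⟩ := hA.2.2.2.2.2.2.2.1 _ ht rfl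
      cases hd with
      | inl hd =>
        exact ⟨qm, L₁, _, e1, e2, RunL.cons ht hr, e4, e5, ⟨e, hd⟩, hqm⟩
      | inr hd =>
        refine ⟨q', L₁ ++ [(qm, none, q')], L₂', by rw [e1]; simp, ?_, hr, ?_, ?_,
          ⟨e, he⟩, (hA.2.2.2.2.2.1 _ ht).2⟩
        · exact run_append e2 (RunL.cons ht (RunL.nil _))
        · rw [runLabel_append, e4, runLabel_cons_none, runLabel_nil, List.append_nil]
        · rw [runLabel_cons_none] at e5
          exact e5

/-- Completeness: everything reachable from the language of `A` is accepted. -/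
lemma post_complete (hρ : ρ.WF) (hA : A.WF) {c₀ c : ρ.Conf} (hacc : A.Accepts c₀)
    (hreach : Reach ρ c₀ c) : (postAut ρ A hidem hheight).Accepts c := by
  obtain ⟨m₀, L, qf, hI, hF, hrun, hlbl, hwt⟩ := hacc
  have hq₀Q : ((c₀.1, m₀) : ρ.Src × ℕ) ∈ A.Q := hA.2.2.1 hI
  -- validity of c
  have hcOK : ρ.ConfOK c := by
    have h1 := (runStruct hA hrun hq₀Q).1
    rw [hlbl] at h1
    exact (reach_inv hρ hreach h1).1
  obtain ⟨P₀, T, P, w, h1, h2, h3, h4⟩ := decomp hreach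
  obtain ⟨qm, L₁, L₂, e1, e2, e3, e4, e5, ⟨eqm, heqm⟩, hqm⟩ :=
    run_split_entry hA hrun hq₀Q hF (by rw [hlbl, h1])
  have hreach₁ : Reach ρ (c₀.1, runLabel L₁) (w, []) := by rw [e4]; exact h3
  have hwt₂ : A.runWt L₂ * A.runWt L₁ ≠ 0 := by
    rw [← runWt_append, ← e1]
    exact hwt
  cases h4 with
  | base hrel =>
    -- P = [], join directly
    have hjreach : Reach ρ (c₀.1, runLabel L₁) (c.1, []) := reach_trans hreach₁ hrel
    have hjoin : Join ρ A c.1 qm := ⟨(c₀.1, m₀), hI, L₁, e2, hjreach⟩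
    have hshape : c.1 = qm.1 ∨ ∀ e' : ρ.En, c.1 ≠ Sum.inr (Sum.inl e') := by
      by_cases hu : ∃ e' : ρ.En, c.1 = Sum.inr (Sum.inl e')
      · obtain ⟨e', he'⟩ := hu
        left
        have hje : Reach ρ (c₀.1, runLabel L₁) (Sum.inr (Sum.inl e'), []) := by
          rw [← he']; exact hjreach
        have heq := entry_empty hje
        have hc₀ : c₀.1 = Sum.inr (Sum.inl e') := congrArg Prod.fst heq
        have hP₀ : runLabel L₁ = [] := congrArg Prod.snd heq
        have := eps_run_node hA e2 hP₀ ⟨e', hc₀⟩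
        rw [he', this, hc₀]
      · push_neg at hu
        exact Or.inr hu
    have hedge : Tr ρ A ((c.1, 0), none, (qm.1, qm.2 + 1)) :=
      Tr.eps4 hjoin hqm ⟨eqm, heqm⟩ hcOK.1 hshape
    refine ⟨0, ((c.1, 0), none, (qm.1, qm.2 + 1)) :: L₂.map (encT ρ), enc ρ qf,
      ⟨c.1, hcOK.1, rfl⟩, ⟨qf, hF, rfl⟩, ?_, ?_, ?_⟩
    · exact RunL.cons hedge (encode_run e3)
    · rw [runLabel_cons_none, runLabel_map_encT, e5, h2]
      simp
    · rw [runWt_cons, runWt_map_encT]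
      have : (postAut ρ A hidem hheight).wt ((c.1, 0), none, (qm.1, qm.2 + 1)) =
          Wabs hidem hheight (JoinW ρ A c.1 qm) := rfl
      rw [this]
      refine mul_wabs_ne_of_mem hidem hheight (x := A.runWt L₁) ?_ hwt₂
      exact ⟨(c₀.1, m₀), hI, L₁, e2, hjreach, rfl⟩
  | @push w w₁ b e₂ u P₁ hrel hcall hup =>
    obtain ⟨Lp, n1, n2, n3⟩ := newRun (A := A) (hidem := hidem) (hheight := hheight)
      hρ hup e₂ rfl
    have hjreach : Reach ρ (c₀.1, runLabel L₁) (w₁, []) := reach_trans hreach₁ hrel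
    have hcall5 : Call5 ρ A (Sum.inr (Sum.inl e₂)) b qm :=
      ⟨(c₀.1, m₀), hI, L₁, w₁, e₂, e2, hjreach, hcall, rfl⟩
    have hedge : Tr ρ A ((Sum.inr (Sum.inl e₂), 0), some b, (qm.1, qm.2 + 1)) :=
      Tr.box5 hcall5 hqm ⟨eqm, heqm⟩
    refine ⟨0, Lp ++ ((Sum.inr (Sum.inl e₂), 0), some b, (qm.1, qm.2 + 1)) ::
      L₂.map (encT ρ), enc ρ qf, ⟨c.1, hcOK.1, rfl⟩, ⟨qf, hF, rfl⟩, ?_, ?_, ?_⟩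
    · exact run_append n1 (RunL.cons hedge (encode_run e3))
    · rw [runLabel_append, n2, runLabel_cons_some, runLabel_map_encT, e5, h2]
      simp
    · rw [runWt_append, n3, mul_one, runWt_cons, runWt_map_encT]
      have : (postAut ρ A hidem hheight).wt
          ((Sum.inr (Sum.inl e₂), 0), some b, (qm.1, qm.2 + 1)) =
          Wabs hidem hheight (Call5W ρ A (Sum.inr (Sum.inl e₂)) b qm) := rfl
      rw [this]
      refine mul_wabs_ne_of_mem hidem hheight (x := A.runWt L₁) ?_ hwt₂
      exact ⟨(c₀.1, m₀), hI, L₁, w₁, e₂, e2, hjreach, hcall, rfl, rfl⟩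

/-- Soundness: everything accepted is reachable from the language of `A`. -/
lemma post_sound (hρ : ρ.WF) (hA : A.WF) :
    ∀ (L : List (Tri ρ)) (u : ρ.Src) (qf : ρ.Src × ℕ),
    (postAut ρ A hidem hheight).RunL (u, 0) L qf →
    qf ∈ (postAut ρ A hidem hheight).F →
    (postAut ρ A hidem hheight).runWt L ≠ 0 →
    ∃ c₀, A.Accepts c₀ ∧ Reach ρ c₀ (u, runLabel L) := by
  intro L
  induction L with
  | nil =>
    intro u qf h hF hw
    cases h
    obtain ⟨a, -, heq⟩ := hF
    have := congrArg Prod.snd heq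
    simp [enc] at this
  | cons t L' ih =>
    intro u qf h hF hw
    cases h with
    | @cons q q' _ o _ ht hr =>
      have htr : Tr ρ A ((u, 0), o, q') := ht
      rw [runWt_cons] at hw
      cases htr with
      | @eps1 u e hrel hok hsh =>
        rw [postWt_new_new, mul_one] at hw
        obtain ⟨c₀, hacc, hre⟩ := ih (Sum.inr (Sum.inl e)) qf hr hF hw
        refine ⟨c₀, hacc, ?_⟩
        rw [runLabel_cons_none]
        refine reach_trans hre ?_
        have := reach_lift' hrel (runLabel L')
        simpa using this
      | @box3 e e' u' b hrel hcall =>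
        rw [postWt_new_new, mul_one] at hw
        obtain ⟨c₀, hacc, hre⟩ := ih (Sum.inr (Sum.inl e')) qf hr hF hw
        refine ⟨c₀, hacc, ?_⟩
        rw [runLabel_cons_some]
        refine reach_trans hre ?_
        refine reach_trans ?_ (reach_tail (reach_refl _)
          (RSM.Step.call (S := runLabel L') hcall))
        have := reach_lift' hrel (runLabel L')
        simpa using this
      | @eps4 u q hjoin hq hqe hok hsh =>
        obtain ⟨LA, r₀, hr1, hr2, hr3⟩ := decode_run hr
        subst hr3
        rw [runWt_map_encT] at hw
        rw [postWt_eps4] at hw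
        obtain ⟨x, hx, hxne⟩ := mul_wabs_ne_extract hidem hheight hw
        obtain ⟨q₀, hq₀, L₁, hrun₁, hreach₁, rfl⟩ := hx
        refine ⟨(q₀.1, runLabel L₁ ++ runLabel LA), ?_, ?_⟩
        · refine ⟨q₀.2, L₁ ++ LA, r₀, by simpa using hq₀, ?_, ?_, ?_, ?_⟩
          · obtain ⟨a, ha, heq⟩ := hF
            rw [hr1] at heq
            rw [← enc_inj heq]
            exact ha
          · refine run_append (by simpa using hrun₁) ?_
            simpa using hr2
          · rw [runLabel_append]
          · rw [runWt_append]
            exact hxne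
        · rw [runLabel_cons_none, runLabel_map_encT]
          have := reach_lift' hreach₁ (runLabel LA)
          simpa using this
      | @box5 u b q hcall5 hq hqe =>
        obtain ⟨LA, r₀, hr1, hr2, hr3⟩ := decode_run hr
        subst hr3
        rw [runWt_map_encT] at hw
        rw [postWt_box5] at hw
        obtain ⟨x, hx, hxne⟩ := mul_wabs_ne_extract hidem hheight hw
        obtain ⟨q₀, hq₀, L₁, w', e, hrun₁, hreach₁, hcall, hu, rfl⟩ := hx
        subst hu
        refine ⟨(q₀.1, runLabel L₁ ++ runLabel LA), ?_, ?_⟩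
        · refine ⟨q₀.2, L₁ ++ LA, r₀, by simpa using hq₀, ?_, ?_, ?_, ?_⟩
          · obtain ⟨a, ha, heq⟩ := hF
            rw [hr1] at heq
            rw [← enc_inj heq]
            exact ha
          · refine run_append (by simpa using hrun₁) ?_
            simpa using hr2
          · rw [runLabel_append]
          · rw [runWt_append]
            exact hxne
        · rw [runLabel_cons_some, runLabel_map_encT]
          refine reach_trans ?_ (reach_tail (reach_refl _)
            (RSM.Step.call (S := runLabel LA) hcall))
          have := reach_lift' hreach₁ (runLabel LA)
          simpa using this

end Main
end PS

private theorem post_star_regular_aux {D : Type} [Semiring D]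
    (hidem : ∀ a : D, a + a = a)
    (hheight : ∃ H : ℕ, ∀ f : ℕ → D, ∀ n : ℕ,
      (∀ i < n, (f (i + 1) + f i = f (i + 1)) ∧ f (i + 1) ≠ f i) → n ≤ H)
    (ρ : RSM D) (hρ : ρ.WF)
    (A : ConfAut ρ) (hA : A.WF) :
    ∃ A' : ConfAut ρ, A'.WF ∧
      A'.Lang = { c : ρ.Conf | ∃ c₀ ∈ A.Lang, ∃ v : D, RSM.Comp ρ c₀ c v } := by
  refine ⟨PS.postAut ρ A hidem hheight, PS.postAut_wf hρ hA, ?_⟩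
  ext c
  simp only [ConfAut.Lang, Set.mem_setOf_eq]
  constructor
  · rintro ⟨m, L, qf, hI, hF, hrun, hlbl, hwt⟩
    obtain ⟨u, hu, heq⟩ := hI
    have hm : m = 0 := (congrArg Prod.snd heq).symm
    subst hm
    obtain ⟨c₀, hacc, hre⟩ := PS.post_sound hρ hA L c.1 qf hrun hF hwt
    refine ⟨c₀, hacc, ?_⟩
    obtain ⟨v, hv⟩ := hre
    rw [hlbl] at hv
    exact ⟨v, hv⟩
  · rintro ⟨c₀, hacc, v, hcomp⟩
    exact PS.post_complete hρ hA hacc ⟨v, hcomp⟩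

/-- Let `ρ` be a recursive state machine over an idempotent semiring of
finite height and `A` a configuration automaton for `ρ`.  Then the set
`post*(L(A)) = { c | ∃ c₀ ∈ L(A), there is a computation from c₀ to c }` of configurations
reachable from `L(A)` is a regular set of configurations: there exists a configuration
automaton `A'` for `ρ` with `L(A') = post*(L(A))`. -/
theorem post_star_regular {D : Type} [Semiring D]
    (hidem : ∀ a : D, a + a = a)
    (hheight : ∃ H : ℕ, ∀ f : ℕ → D, ∀ n : ℕ,
      (∀ i < n, (f (i + 1) + f i = f (i + 1)) ∧ f (i + 1) ≠ f i) → n ≤ H)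
    (ρ : RSM D) (hρ : ρ.WF)
    (A : ConfAut ρ) (hA : A.WF) :
    ∃ A' : ConfAut ρ, A'.WF ∧
      A'.Lang = { c : ρ.Conf | ∃ c₀ ∈ A.Lang, ∃ v : D, RSM.Comp ρ c₀ c v } :=
  post_star_regular_aux hidem hheight ρ hρ A hA
end
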